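/- arXiv:2209.14094 — 2 statements merged into one kernel-verified Lean document; each statement's English description precedes it below -/
import Mathlib

section
/- In a finite directed acyclic graph, contracting an edge (u, v) (identifying u and v into a single vertex and removing the edge) yields an acyclic graph if and only if the only directed path from u to v in the original graph is the edge (u, v) itself. -/
/-- Contracting the edge (u,v) of a finite DAG (identifying v with u and removing the
edge) yields an acyclic graph if and only if the only directed path from u to v is the
edge (u,v) itself. -/
theorem stmt4 {V : Type*} [Fintype V] [DecidableEq V] (E : V → V → Prop) (u v : V)
    (huv : E u v) (hacyc : ∀ a : V, ¬ Relation.TransGen E a a) :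
    (∀ a : V, ¬ Relation.TransGen
        (fun a b => ∃ a' b', E a' b' ∧ ¬ (a' = u ∧ b' = v) ∧
          (if a' = v then u else a') = a ∧ (if b' = v then u else b') = b) a a) ↔
    (∀ z, E u z → z ≠ v → ¬ Relation.ReflTransGen E z v) := by
  classical
  set E' : V → V → Prop := fun a b => ∃ a' b', E a' b' ∧ ¬ (a' = u ∧ b' = v) ∧
      (if a' = v then u else a') = a ∧ (if b' = v then u else b') = b with hE'
  have hne : u ≠ v := by
    rintro rfl; exact hacyc u (Relation.TransGen.single huv)
  have hcases : ∀ s t : V, (if s = v then u else s) = (if t = v then u else t) →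
      s = t ∨ (s = u ∧ t = v) ∨ (s = v ∧ t = u) := by
    intro s t h
    by_cases hs : s = v <;> by_cases ht : t = v <;> simp [hs, ht] at h ⊢ <;> tauto
  constructor
  · intro hA z huz hzv hrt
    have key : ∀ x, Relation.ReflTransGen E x v →
        Relation.ReflTransGen E' (if x = v then u else x) u ∨ Relation.ReflTransGen E x u := by
      intro x h
      induction h using Relation.ReflTransGen.head_induction_on with
      | refl => left; rw [if_pos rfl]
      | head hxy _ ih =>
        rename_i p q _
        rcases ih with hl | hr
        · by_cases hpq : p = u ∧ q = v
          · right; rw [hpq.1]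
          · left; exact Relation.ReflTransGen.head ⟨p, q, hxy, hpq, rfl, rfl⟩ hl
        · right; exact Relation.ReflTransGen.head hxy hr
    rcases key z hrt with hl | hr
    · exact hA u (Relation.TransGen.head'
        ⟨u, z, huz, fun h => hzv h.2, by simp [hne], rfl⟩ hl)
    · exact hacyc u (Relation.TransGen.head' huz hr)
  · intro H a hcyc
    have main : ∀ b, Relation.TransGen E' a b →
        (∃ x y, (if x = v then u else x) = a ∧ (if y = v then u else y) = b ∧
          ∃ z, E x z ∧ ¬ (x = u ∧ z = v) ∧ Relation.ReflTransGen E z y) ∨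
        (∃ x y, (if x = v then u else x) = a ∧ (if y = v then u else y) = b ∧
          (∃ z, E x z ∧ ¬ (x = u ∧ z = v) ∧ Relation.ReflTransGen E z v) ∧
          ∃ z, E u z ∧ ¬ (u = u ∧ z = v) ∧ Relation.ReflTransGen E z y) := by
      intro b h
      induction h with
      | single h =>
        obtain ⟨a', b', hab, hF, hpa, hpb⟩ := h
        exact Or.inl ⟨a', b', hpa, hpb, b', hab, hF, Relation.ReflTransGen.refl⟩
      | tail _ h' ih =>
        obtain ⟨a', b', hab, hF, hpa, hpb⟩ := h'
        rcases ih with ⟨x, y, hx, hy, z, hxz, hxzF, hzy⟩ | ⟨x, y, hx, hy, hCxv, z, huz, huzF, hzy⟩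
        · rcases hcases y a' (hy.trans hpa.symm) with rfl | ⟨h1, h2⟩ | ⟨h1, h2⟩
          · exact Or.inl ⟨x, b', hx, hpb, z, hxz, hxzF, hzy.tail hab⟩
          · subst y; subst a'
            exact Or.inl ⟨x, b', hx, hpb, z, hxz, hxzF, (hzy.tail huv).tail hab⟩
          · subst y; subst a'
            exact Or.inr ⟨x, b', hx, hpb, ⟨z, hxz, hxzF, hzy⟩, b', hab, hF,
              Relation.ReflTransGen.refl⟩
        · rcases hcases y a' (hy.trans hpa.symm) with rfl | ⟨h1, h2⟩ | ⟨h1, h2⟩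
          · exact Or.inr ⟨x, b', hx, hpb, hCxv, z, huz, huzF, hzy.tail hab⟩
          · subst y; subst a'
            exact absurd (Relation.TransGen.head' huz hzy) (hacyc u)
          · subst y; subst a'
            exact absurd hzy (H z huz (fun h => huzF ⟨rfl, h⟩))
    rcases main a hcyc with ⟨x, y, hx, hy, z, hxz, hxzF, hzy⟩ | ⟨x, y, hx, hy, hCxv, z, huz, huzF, hzy⟩
    · rcases hcases x y (hx.trans hy.symm) with rfl | ⟨h1, h2⟩ | ⟨h1, h2⟩
      · exact hacyc x (Relation.TransGen.head' hxz hzy)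
      · subst y; subst x
        exact H z hxz (fun h => hxzF ⟨rfl, h⟩) hzy
      · subst y; subst x
        exact hacyc u (Relation.TransGen.head huv (Relation.TransGen.head' hxz hzy))
    · rcases hcases x y (hx.trans hy.symm) with rfl | ⟨h1, h2⟩ | ⟨h1, h2⟩
      · obtain ⟨z', hxz', _, hz'v⟩ := hCxv
        exact H z huz (fun h => huzF ⟨rfl, h⟩)
          (hzy.trans (Relation.ReflTransGen.head hxz' hz'v))
      · subst y; subst x
        exact H z huz (fun h => huzF ⟨rfl, h⟩) hzy
      · subst y; subst x
        exact hacyc u (Relation.TransGen.head' huz hzy)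
end

section
/- Let G be a finite connected undirected planar graph with a combinatorial embedding, and let w be an articulation point of G. Then w is incident to at least two corners belonging to the same face of the embedding. -/
/-- Reversal of darts, as a permutation. -/
def dartSymmEquiv {V : Type*} (G : SimpleGraph V) : Equiv.Perm G.Dart where
  toFun := SimpleGraph.Dart.symm
  invFun := SimpleGraph.Dart.symm
  left_inv d := SimpleGraph.Dart.symm_symm d
  right_inv d := SimpleGraph.Dart.symm_symm d

/-- The face permutation of a rotation system `ρ`: the successor of a dart `d` is the
rotation image of the reversed dart, `ρ d.symm`.  Faces of the embedding are the orbits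
of this permutation; each dart `d` represents the corner of its containing face at the
vertex `d.toProd.1`. -/
def facePerm {V : Type*} (G : SimpleGraph V) (ρ : Equiv.Perm G.Dart) :
    Equiv.Perm G.Dart :=
  (dartSymmEquiv G).trans ρ

/-- The setoid of darts in the same face (orbit of the face permutation). -/
def faceSetoid {V : Type*} (G : SimpleGraph V) (ρ : Equiv.Perm G.Dart) :
    Setoid G.Dart :=
  ⟨(facePerm G ρ).SameCycle,
    ⟨fun _ => Equiv.Perm.SameCycle.refl _ _,
     fun h => h.symm, fun h h' => h.trans h'⟩⟩

/-- In a finite connected planar graph with a combinatorial embedding (a rotation system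
`ρ`, cyclic at each vertex, satisfying Euler's formula `|V| - |E| + |F| = 2`, here stated
as `2|V| - #darts + 2|F| = 4`), every articulation point `w` is incident to at least two
corners belonging to the same face of the embedding. -/
theorem stmt11 {V : Type*} [Fintype V] [DecidableEq V]
    (G : SimpleGraph V) [DecidableRel G.Adj] (hconn : G.Connected)
    (ρ : Equiv.Perm G.Dart)
    (hρ : ∀ d : G.Dart, (ρ d).toProd.1 = d.toProd.1)
    (hcyc : ∀ d d' : G.Dart, d.toProd.1 = d'.toProd.1 → ∃ n : ℕ, (ρ ^ n) d = d')
    (heuler : (2 * Fintype.card V : ℤ) - Fintype.card G.Dart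
        + 2 * Nat.card (Quotient (faceSetoid G ρ)) = 4)
    (w : V)
    (hart : ∃ a b : {x : V // x ≠ w},
      ¬ (G.induce {x : V | x ≠ w}).Reachable ⟨a.1, a.2⟩ ⟨b.1, b.2⟩) :
    ∃ d d' : G.Dart, d ≠ d' ∧ d.toProd.1 = w ∧ d'.toProd.1 = w ∧
      (facePerm G ρ).SameCycle d d' := by
  classical
  by_contra hcon
  push_neg at hcon
  set F : Equiv.Perm G.Dart := facePerm G ρ with hF
  set H : SimpleGraph {x : V | x ≠ w} := G.induce {x : V | x ≠ w} with hH
  have hRcong : ∀ (x y x' y' : {x : V | x ≠ w}), x = x' → y = y' →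
      H.Reachable x y → H.Reachable x' y' := by
    rintro x y _ _ rfl rfl h; exact h
  have hFfst : ∀ d : G.Dart, (F d).toProd.1 = d.toProd.2 := fun d => hρ d.symm
  have hsame : ∀ (d d' : G.Dart), d.toProd.1 = w → d'.toProd.1 = w →
      F.SameCycle d d' → d = d' := by
    intro d d' hd hd' hs
    by_contra hne
    exact hcon d d' hne hd hd' hs
  have hsndne : ∀ d : G.Dart, d.toProd.1 = w → d.toProd.2 ≠ w := by
    intro d hd h2
    exact d.adj.ne (hd.trans h2.symm)
  have hinvfst : ∀ d : G.Dart, (ρ⁻¹ d).toProd.1 = d.toProd.1 := by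
    intro d
    have h := hρ (ρ⁻¹ d)
    rw [show ρ (ρ⁻¹ d) = d from ρ.apply_symm_apply d] at h
    exact h.symm
  -- Key lemma A
  have lemA : ∀ (d : G.Dart) (hd : d.toProd.1 = w),
      H.Reachable ⟨d.toProd.2, hsndne d hd⟩
        ⟨(ρ⁻¹ d).toProd.2, hsndne (ρ⁻¹ d) ((hinvfst d).trans hd)⟩ := by
    intro d hd
    set n := Function.minimalPeriod (⇑F) d with hn
    have hper : Function.IsPeriodicPt (⇑F) (orderOf F) d := by
      simp only [Function.IsPeriodicPt, Function.IsFixedPt]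
      show (F ^ orderOf F) d = d
      simp [pow_orderOf_eq_one]
    have hnpos : 0 < n :=
      Function.IsPeriodicPt.minimalPeriod_pos (orderOf_pos F) hper
    have hFn : (F ^ n) d = d := Function.isPeriodicPt_minimalPeriod (⇑F) d
    have hmid : ∀ i : ℕ, 0 < i → i < n → ((F ^ i) d).toProd.1 ≠ w := by
      intro i hi hilt heq
      have hsc : F.SameCycle d ((F ^ i) d) := ⟨(i : ℤ), by simp [zpow_natCast]⟩
      have heqd := hsame d ((F ^ i) d) hd heq hsc
      have hip : Function.IsPeriodicPt (⇑F) i d := by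
        simp only [Function.IsPeriodicPt, Function.IsFixedPt]
        show (F ^ i) d = d
        exact heqd.symm
      have := Function.IsPeriodicPt.minimalPeriod_le hi hip
      omega
    have hstep : ∀ i : ℕ, ((F ^ (i + 1)) d).toProd.1 = ((F ^ i) d).toProd.2 := by
      intro i
      have h : (F ^ (i + 1)) d = F ((F ^ i) d) := by
        rw [pow_succ', Equiv.Perm.mul_apply]
      rw [h, hFfst]
    have hn1 : n ≠ 1 := by
      intro h
      have h1 : F d = d := by have := hFn; rwa [h, pow_one] at this
      have h2 : (F d).toProd.1 = d.toProd.2 := hFfst d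
      rw [h1] at h2
      exact d.adj.ne h2
    have hn2 : 2 ≤ n := by omega
    have chain : ∀ i : ℕ, 0 < i → i < n →
        ∃ h1 : ((F ^ i) d).toProd.1 ≠ w,
          H.Reachable ⟨d.toProd.2, hsndne d hd⟩ ⟨((F ^ i) d).toProd.1, h1⟩ := by
      intro i
      induction i with
      | zero => omega
      | succ j ih =>
        intro _ hlt
        refine ⟨hmid (j+1) (by omega) hlt, ?_⟩
        rcases Nat.eq_zero_or_pos j with hj | hj
        · subst hj
          refine hRcong _ _ _ _ rfl (Subtype.ext ?_) (SimpleGraph.Reachable.refl _)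
          simpa using (hstep 0).symm
        · obtain ⟨h1, hr⟩ := ih hj (by omega)
          refine hr.trans ?_
          have hadj : H.Adj ⟨((F ^ j) d).toProd.1, h1⟩
              ⟨((F ^ (j+1)) d).toProd.1, hmid (j+1) (by omega) hlt⟩ := by
            show G.Adj ((F ^ j) d).toProd.1 ((F ^ (j+1)) d).toProd.1
            rw [hstep j]
            exact ((F ^ j) d).adj
          exact hadj.reachable
    obtain ⟨h1, hr⟩ := chain (n - 1) (by omega) (by omega)
    have hfin : (F ^ (n - 1)) d = (ρ⁻¹ d).symm := by
      have h1' : F ((F ^ (n - 1)) d) = d := by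
        have he : F ((F ^ (n-1)) d) = (F ^ n) d := by
          have hnn : n - 1 + 1 = n := by omega
          conv_rhs => rw [← hnn, pow_succ', Equiv.Perm.mul_apply]
        rw [he, hFn]
      have hρeq : ρ ((F ^ (n-1)) d).symm = d := h1'
      have h2 := congrArg (⇑ρ⁻¹) hρeq
      rw [show ρ⁻¹ (ρ ((F ^ (n-1)) d).symm) = ((F ^ (n-1)) d).symm from ρ.symm_apply_apply _] at h2
      calc (F ^ (n-1)) d = ((F ^ (n-1)) d).symm.symm := (SimpleGraph.Dart.symm_symm _).symm
        _ = (ρ⁻¹ d).symm := by rw [h2]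
    have hfst : ((F ^ (n-1)) d).toProd.1 = (ρ⁻¹ d).toProd.2 := by
      rw [hfin]; rfl
    exact hRcong _ _ _ _ rfl (Subtype.ext hfst) hr
  -- Lemma B
  have hpowfst : ∀ (m : ℕ) (d : G.Dart), d.toProd.1 = w → ((ρ ^ m) d).toProd.1 = w := by
    intro m d hd
    induction m with
    | zero => simpa
    | succ k ih =>
      have h : (ρ ^ (k+1)) d = ρ ((ρ ^ k) d) := by
        rw [pow_succ', Equiv.Perm.mul_apply]
      rw [h, hρ]; exact ih
  have lemB : ∀ (d d' : G.Dart) (hd : d.toProd.1 = w) (hd' : d'.toProd.1 = w),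
      H.Reachable ⟨d.toProd.2, hsndne d hd⟩ ⟨d'.toProd.2, hsndne d' hd'⟩ := by
    intro d d' hd hd'
    obtain ⟨m, hm⟩ := hcyc d d' (hd.trans hd'.symm)
    have key : ∀ m : ℕ, H.Reachable ⟨d.toProd.2, hsndne d hd⟩
        ⟨((ρ ^ m) d).toProd.2, hsndne _ (hpowfst m d hd)⟩ := by
      intro m
      induction m with
      | zero =>
        refine hRcong _ _ _ _ rfl (Subtype.ext ?_) (SimpleGraph.Reachable.refl _)
        simp
      | succ k ih =>
        refine ih.trans ?_
        have hA := lemA ((ρ ^ (k+1)) d) (hpowfst (k+1) d hd)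
        have hback : ρ⁻¹ ((ρ ^ (k+1)) d) = (ρ ^ k) d := by
          have h : (ρ ^ (k+1)) d = ρ ((ρ ^ k) d) := by
            rw [pow_succ', Equiv.Perm.mul_apply]
          rw [h, show ρ⁻¹ (ρ ((ρ ^ k) d)) = (ρ ^ k) d from ρ.symm_apply_apply _]
        refine hRcong _ _ _ _ (Subtype.ext ?_) rfl hA.symm
        exact congrArg (fun e => e.toProd.2) hback
    refine hRcong _ _ _ _ rfl (Subtype.ext ?_) (key m)
    exact congrArg (fun e => e.toProd.2) hm
  -- Lemma C
  have lemC : ∀ (x y : V) (p : G.Walk x y), y = w → ∀ hx : x ≠ w,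
      ∃ (d : G.Dart) (hd : d.toProd.1 = w),
        H.Reachable ⟨x, hx⟩ ⟨d.toProd.2, hsndne d hd⟩ := by
    intro x y p
    induction p with
    | nil => intro hy hx; exact absurd hy hx
    | @cons x z y hxz p ih =>
      intro hy hx
      by_cases hz : z = w
      · refine ⟨SimpleGraph.Dart.mk (z, x) hxz.symm, hz, ?_⟩
        exact SimpleGraph.Reachable.refl _
      · obtain ⟨d, hd, hr⟩ := ih hy hz
        refine ⟨d, hd, ?_⟩
        refine SimpleGraph.Reachable.trans ?_ hr
        have hadj : H.Adj ⟨x, hx⟩ ⟨z, hz⟩ := hxz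
        exact hadj.reachable
  obtain ⟨a, b, hab⟩ := hart
  obtain ⟨pa⟩ := hconn a.1 w
  obtain ⟨pb⟩ := hconn b.1 w
  obtain ⟨da, hda, hra⟩ := lemC a.1 w pa rfl a.2
  obtain ⟨db, hdb, hrb⟩ := lemC b.1 w pb rfl b.2
  exact hab (hra.trans ((lemB da db hda hdb).trans hrb.symm))
end
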